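/- In the topological setting, for every t with γ_min ≤ t < γ_max one has N_t ≠ ∅ and N_t ≠ Θ. -/

import Mathlib

open MeasureTheory Filter Topology

/-- The general setting of the paper: a measurable base system with invertible
driving map `T`, a concave fibre function `h` (with its derivative `h'` on `[0,∞)`)
and a bounded measurable positive function `g`. -/
structure Setting (Θ : Type*) [MeasurableSpace Θ] where
  T : Θ → Θ
  Tinv : Θ → Θ
  left_inv : Function.LeftInverse Tinv T
  right_inv : Function.RightInverse Tinv T
  T_meas : Measurable T
  Tinv_meas : Measurable Tinv
  h : ℝ → ℝ
  h' : ℝ → ℝ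
  h_hasDeriv : ∀ x ∈ Set.Ici (0 : ℝ), HasDerivWithinAt h (h' x) (Set.Ici 0) x
  h'_cont : ContinuousOn h' (Set.Ici 0)
  h_strictConcave : StrictConcaveOn ℝ (Set.Ici 0) h
  h_zero : h 0 = 0
  h'_pos : ∀ x : ℝ, 0 < x → 0 < h' x
  h'_zero : h' 0 = 1
  h_sublinear : Tendsto (fun x => h x / x) atTop (𝓝 0)
  g : Θ → ℝ
  g_pos : ∀ θ, 0 < g θ
  g_bdd : ∃ C : ℝ, ∀ θ, g θ ≤ C
  g_meas : Measurable g

namespace Setting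

variable {Θ : Type*} [MeasurableSpace Θ]

/-- The fibre maps `f_t(θ,x) = e^{-t} g(θ) h(x)`. -/
noncomputable def f (S : Setting Θ) (t : ℝ) (θ : Θ) (x : ℝ) : ℝ :=
  Real.exp (-t) * S.g θ * S.h x

/-- The iterated fibre maps: `fn t 0 θ x = x` and
`fn t (n+1) θ x = f t (T^[n] θ) (fn t n θ x)`, so that `fn t 1 = f t`. -/
noncomputable def fn (S : Setting Θ) (t : ℝ) : ℕ → Θ → ℝ → ℝ
  | 0, _, x => x
  | n + 1, θ, x => S.f t (S.T^[n] θ) (S.fn t n θ x)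

/-- `ψ_{t,n}(θ) = f_t^n(T^{-n}θ, M)`. -/
noncomputable def ψ (S : Setting Θ) (t M : ℝ) (n : ℕ) (θ : Θ) : ℝ :=
  S.fn t n (S.Tinv^[n] θ) M

/-- The maximal invariant function `φ_t(θ) = inf_{n ≥ 1} ψ_{t,n}(θ)`. -/
noncomputable def φ (S : Setting Θ) (t M : ℝ) (θ : Θ) : ℝ :=
  ⨅ n : ℕ, S.ψ t M (n + 1) θ

/-- The zero set `N_t = {θ : φ_t(θ) = 0}`. -/
noncomputable def Nset (S : Setting Θ) (t M : ℝ) : Set Θ := {θ | S.φ t M θ = 0}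

/-- The critical parameter `t_c(θ) = inf {t : φ_t(θ) = 0}`. -/
noncomputable def tc (S : Setting Θ) (M : ℝ → ℝ) (θ : Θ) : ℝ :=
  sInf {t : ℝ | S.φ t (M t) θ = 0}

/-- The bifurcation set `S_t = {θ : t_c(θ) = t}`. -/
noncomputable def Sset (S : Setting Θ) (M : ℝ → ℝ) (t : ℝ) : Set Θ :=
  {θ | S.tc M θ = t}

/-- The Birkhoff average `Γ^{(n)}(θ) = (1/n) ∑_{k=1}^n log g(T^{-k}θ)`. -/
noncomputable def Γn (S : Setting Θ) (n : ℕ) (θ : Θ) : ℝ :=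
  (∑ k ∈ Finset.range n, Real.log (S.g (S.Tinv^[k + 1] θ))) / n

/-- The lower backwards Lyapunov average `Γ(θ) = liminf_n Γ^{(n)}(θ)`. -/
noncomputable def Γ (S : Setting Θ) (θ : Θ) : ℝ :=
  Filter.liminf (fun n : ℕ => S.Γn n θ) Filter.atTop

/-- The averaged exponent `γ(μ) = ∫ log g dμ`. -/
noncomputable def γfn (S : Setting Θ) (μ : Measure Θ) : ℝ :=
  ∫ θ, Real.log (S.g θ) ∂μ

/-- The function `H(x) = log (h(x)/x)`. -/
noncomputable def Hfn (S : Setting Θ) (x : ℝ) : ℝ := Real.log (S.h x / x)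

end Setting

/-- The set of averaged exponents `γ(μ)` of `T`-invariant Borel probability measures. -/
def Setting.γSet {Θ : Type*} [MeasurableSpace Θ] (S : Setting Θ) : Set ℝ :=
  {x : ℝ | ∃ μ : MeasureTheory.Measure Θ, MeasureTheory.IsProbabilityMeasure μ ∧
    MeasureTheory.MeasurePreserving S.T μ μ ∧ x = S.γfn μ}

/-- `γ_min`. -/
noncomputable def Setting.γmin {Θ : Type*} [MeasurableSpace Θ] (S : Setting Θ) : ℝ :=
  sInf S.γSet

/-- `γ_max`. -/
noncomputable def Setting.γmax {Θ : Type*} [MeasurableSpace Θ] (S : Setting Θ) : ℝ :=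
  sSup S.γSet

namespace Setting
variable {Θ : Type*} [MeasurableSpace Θ] (S : Setting Θ)

lemma h_contOn : ContinuousOn S.h (Set.Ici 0) :=
  fun x hx => (S.h_hasDeriv x hx).continuousWithinAt

lemma slope_tendsto : Tendsto (fun y => S.h y / y) (𝓝[>] (0:ℝ)) (𝓝 1) := by
  have h1 : Set.Ici (0:ℝ) \ {0} = Set.Ioi 0 := Set.Ici_sdiff_left
  have h2 := hasDerivWithinAt_iff_tendsto_slope.1 (S.h_hasDeriv 0 (by simp))
  rw [S.h'_zero, h1] at h2
  refine h2.congr' ?_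
  filter_upwards [self_mem_nhdsWithin] with y hy
  simp [slope_def_field, S.h_zero]

lemma h_strictMonoOn : ∀ p q : ℝ, 0 ≤ p → p < q → S.h p < S.h q := by
  intro p q hp hpq
  obtain ⟨c, hc, hceq⟩ := exists_hasDerivAt_eq_slope S.h S.h' hpq
    (S.h_contOn.mono (fun x hx => le_trans hp hx.1))
    (fun x hx => ((S.h_hasDeriv x (le_of_lt (lt_of_le_of_lt hp hx.1))).hasDerivAt
      (Ici_mem_nhds (lt_of_le_of_lt hp hx.1))))
  have hc0 : 0 < S.h' c := S.h'_pos c (lt_of_le_of_lt hp hc.1)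
  have : 0 < (S.h q - S.h p) / (q - p) := hceq ▸ hc0
  have hq : 0 < q - p := sub_pos.2 hpq
  have h3 := mul_pos this hq
  rw [div_mul_cancel₀ _ hq.ne'] at h3
  linarith

lemma h_pos : ∀ x : ℝ, 0 < x → 0 < S.h x := by
  intro x hx
  have := S.h_strictMonoOn 0 x le_rfl hx
  rwa [S.h_zero] at this

lemma h_monoOn : ∀ p q : ℝ, 0 ≤ p → p ≤ q → S.h p ≤ S.h q := by
  intro p q hp hpq
  rcases eq_or_lt_of_le hpq with rfl | hlt
  · exact le_rfl
  · exact (S.h_strictMonoOn p q hp hlt).le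

/-- concavity: for `0 < y ≤ x`, `h y ≥ (y/x) * h x`. -/
lemma h_concave_ineq : ∀ x y : ℝ, 0 < y → y ≤ x → (y / x) * S.h x ≤ S.h y := by
  intro x y hy hyx
  have hx : 0 < x := lt_of_lt_of_le hy hyx
  have key := S.h_strictConcave.concaveOn.2 (Set.self_mem_Ici)
    (show x ∈ Set.Ici (0:ℝ) from hx.le)
    (show (0:ℝ) ≤ 1 - y/x by
      rw [sub_nonneg]; exact div_le_one_of_le₀ hyx hx.le)
    (show (0:ℝ) ≤ y/x from (div_pos hy hx).le)
    (by ring)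
  simp only [smul_eq_mul, S.h_zero, mul_zero, zero_add] at key
  rw [div_mul_cancel₀ _ hx.ne'] at key
  exact key

lemma h_le_self : ∀ x : ℝ, 0 ≤ x → S.h x ≤ x := by
  intro x hx
  rcases eq_or_lt_of_le hx with rfl | hx
  · simp [S.h_zero]
  have : (1:ℝ) ≥ S.h x / x := by
    refine ge_of_tendsto S.slope_tendsto ?_
    filter_upwards [Ioo_mem_nhdsGT_of_mem (show (0:ℝ) ∈ Set.Ico 0 x from ⟨le_rfl, hx⟩)]
      with y hy
    have hcon := S.h_concave_ineq x y hy.1 hy.2.le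
    rw [div_mul_eq_mul_div, div_le_iff₀ hx] at hcon
    rw [div_le_div_iff₀ hx hy.1]
    linarith
  rw [ge_iff_le, div_le_one hx] at this
  exact this

lemma h_lt_self : ∀ p : ℝ, 0 < p → S.h p < p := by
  intro p hp
  have hmid := S.h_strictConcave.2 (Set.self_mem_Ici) (show p ∈ Set.Ici (0:ℝ) from hp.le)
    (ne_of_lt hp) (show (0:ℝ) < 1/2 by norm_num) (show (0:ℝ) < 1/2 by norm_num) (by norm_num)
  simp only [smul_eq_mul, S.h_zero, mul_zero, zero_add] at hmid
  have h2 : S.h (1/2 * p) ≤ 1/2 * p := S.h_le_self _ (by linarith)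
  linarith

/-- ratio decreasing: `0 < p ≤ x → h x / x ≤ h p / p`. -/
lemma ratio_anti : ∀ p x : ℝ, 0 < p → p ≤ x → S.h x / x ≤ S.h p / p := by
  intro p x hp hpx
  have hx : 0 < x := lt_of_lt_of_le hp hpx
  have := S.h_concave_ineq x p hp hpx
  rw [div_le_div_iff₀ hx hp]
  rw [div_mul_eq_mul_div, div_le_iff₀ hx] at this
  linarith

lemma exists_delta (ε M : ℝ) (hε : 0 < ε) (hM : 0 < M) :
    ∃ δ : ℝ, 0 < δ ∧ δ ≤ M ∧ ∀ y : ℝ, 0 < y → y ≤ δ → Real.exp (-ε) * y ≤ S.h y := by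
  have hev : ∀ᶠ y in 𝓝[>] (0:ℝ), Real.exp (-ε) < S.h y / y := by
    apply S.slope_tendsto.eventually
    exact eventually_gt_nhds (by
      have := Real.exp_lt_one_iff.2 (neg_lt_zero.2 hε); linarith)
  rw [eventually_iff, mem_nhdsGT_iff_exists_Ioc_subset] at hev
  obtain ⟨u, hu, hsub⟩ := hev
  refine ⟨min u M, lt_min hu hM, min_le_right _ _, ?_⟩
  intro y hy hyd
  have : y ∈ Set.Ioc (0:ℝ) u := ⟨hy, le_trans hyd (min_le_left _ _)⟩
  have := hsub this
  simp only [Set.mem_setOf_eq] at this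
  rw [lt_div_iff₀ hy] at this
  linarith

section Bpart
variable (t M : ℝ)

lemma f_pos (ht : True) {x : ℝ} (θ : Θ) (hx : 0 < x) : 0 < S.f t θ x :=
  mul_pos (mul_pos (Real.exp_pos _) (S.g_pos θ)) (S.h_pos x hx)

lemma f_mono {x y : ℝ} (θ : Θ) (hx : 0 ≤ x) (hxy : x ≤ y) : S.f t θ x ≤ S.f t θ y := by
  unfold f
  have := S.h_monoOn x y hx hxy
  have hc : 0 ≤ Real.exp (-t) * S.g θ := (mul_pos (Real.exp_pos _) (S.g_pos θ)).le
  nlinarith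

lemma fn_pos_le (hM : 0 < M) (hMf : ∀ θ, S.f t θ M < M) :
    ∀ n : ℕ, ∀ θ : Θ, ∀ x : ℝ, 0 < x → x ≤ M →
      0 < S.fn t n θ x ∧ S.fn t n θ x ≤ M := by
  intro n
  induction n with
  | zero => intro θ x hx hxM; exact ⟨hx, hxM⟩
  | succ n ih =>
    intro θ x hx hxM
    obtain ⟨h1, h2⟩ := ih θ x hx hxM
    constructor
    · exact S.f_pos t trivial _ h1
    · calc S.f t (S.T^[n] θ) (S.fn t n θ x) ≤ S.f t (S.T^[n] θ) M :=
            S.f_mono t _ h1.le h2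
        _ ≤ M := (hMf _).le

lemma fn_succ_inner : ∀ n : ℕ, ∀ θ : Θ, ∀ x : ℝ,
    S.fn t (n+1) θ x = S.fn t n (S.T θ) (S.f t θ x) := by
  intro n
  induction n with
  | zero => intro θ x; rfl
  | succ n ih =>
    intro θ x
    show S.f t (S.T^[n+1] θ) (S.fn t (n+1) θ x) = S.f t (S.T^[n] (S.T θ)) (S.fn t n (S.T θ) (S.f t θ x))
    rw [ih θ x, Function.iterate_succ_apply]

lemma T_iter_Tinv_iter : ∀ n : ℕ, ∀ θ : Θ, S.T^[n] (S.Tinv^[n] θ) = θ := by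
  intro n
  induction n with
  | zero => intro θ; rfl
  | succ n ih =>
    intro θ
    rw [Function.iterate_succ_apply S.Tinv, Function.iterate_succ_apply' S.T, ih (S.Tinv θ)]
    exact S.right_inv θ

lemma ψ_succ_T (n : ℕ) (θ : Θ) : S.ψ t M (n+1) (S.T θ) = S.f t θ (S.ψ t M n θ) := by
  unfold ψ
  have e1 : S.Tinv^[n+1] (S.T θ) = S.Tinv^[n] θ := by
    rw [Function.iterate_succ_apply S.Tinv, S.left_inv θ]
  rw [e1]
  show S.f t (S.T^[n] (S.Tinv^[n] θ)) (S.fn t n (S.Tinv^[n] θ) M) = _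
  rw [S.T_iter_Tinv_iter n θ]

lemma ψ_succ_Tinv (n : ℕ) (θ : Θ) : S.ψ t M (n+1) θ = S.f t (S.Tinv θ) (S.ψ t M n (S.Tinv θ)) := by
  conv_lhs => rw [show θ = S.T (S.Tinv θ) from (S.right_inv θ).symm]
  exact S.ψ_succ_T t M n (S.Tinv θ)

lemma ψ_pos_le (hM : 0 < M) (hMf : ∀ θ, S.f t θ M < M) (n : ℕ) (θ : Θ) :
    0 < S.ψ t M n θ ∧ S.ψ t M n θ ≤ M :=
  S.fn_pos_le t M hM hMf n _ M hM le_rfl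

lemma ψ_antitone_succ (hM : 0 < M) (hMf : ∀ θ, S.f t θ M < M) :
    ∀ n : ℕ, ∀ θ : Θ, S.ψ t M (n+1) θ ≤ S.ψ t M n θ := by
  intro n
  induction n with
  | zero =>
    intro θ
    rw [S.ψ_succ_Tinv t M 0 θ]
    show S.f t (S.Tinv θ) M ≤ M
    exact (hMf _).le
  | succ n ih =>
    intro θ
    rw [S.ψ_succ_Tinv t M (n+1) θ, S.ψ_succ_Tinv t M n θ]
    exact S.f_mono t _ (S.ψ_pos_le t M hM hMf (n+1) (S.Tinv θ)).1.le (ih (S.Tinv θ))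

lemma ψ_antitone (hM : 0 < M) (hMf : ∀ θ, S.f t θ M < M) (θ : Θ) :
    Antitone (fun n => S.ψ t M n θ) :=
  antitone_nat_of_succ_le (fun n => S.ψ_antitone_succ t M hM hMf n θ)

lemma φ_nonneg (hM : 0 < M) (hMf : ∀ θ, S.f t θ M < M) (θ : Θ) : 0 ≤ S.φ t M θ :=
  le_ciInf (fun n => (S.ψ_pos_le t M hM hMf (n+1) θ).1.le)

lemma bddBelow_ψ (hM : 0 < M) (hMf : ∀ θ, S.f t θ M < M) (θ : Θ) :
    BddBelow (Set.range fun n => S.ψ t M (n+1) θ) :=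
  ⟨0, by rintro x ⟨n, rfl⟩; exact (S.ψ_pos_le t M hM hMf (n+1) θ).1.le⟩

lemma bddBelow_ψ' (hM : 0 < M) (hMf : ∀ θ, S.f t θ M < M) (θ : Θ) :
    BddBelow (Set.range fun n => S.ψ t M n θ) :=
  ⟨0, by rintro x ⟨n, rfl⟩; exact (S.ψ_pos_le t M hM hMf n θ).1.le⟩

lemma φ_le_ψ (hM : 0 < M) (hMf : ∀ θ, S.f t θ M < M) (n : ℕ) (θ : Θ) :
    S.φ t M θ ≤ S.ψ t M (n+1) θ :=
  ciInf_le (S.bddBelow_ψ t M hM hMf θ) n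

lemma φ_le_M (hM : 0 < M) (hMf : ∀ θ, S.f t θ M < M) (θ : Θ) : S.φ t M θ ≤ M :=
  le_trans (S.φ_le_ψ t M hM hMf 0 θ) (S.ψ_pos_le t M hM hMf 1 θ).2

lemma φ_eq_iInf0 (hM : 0 < M) (hMf : ∀ θ, S.f t θ M < M) (θ : Θ) :
    S.φ t M θ = ⨅ n : ℕ, S.ψ t M n θ := by
  apply le_antisymm
  · apply le_ciInf
    intro n
    cases n with
    | zero =>
      exact le_trans (S.φ_le_ψ t M hM hMf 0 θ) (by
        show S.ψ t M 1 θ ≤ S.ψ t M 0 θ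
        exact S.ψ_antitone_succ t M hM hMf 0 θ)
    | succ n => exact S.φ_le_ψ t M hM hMf n θ
  · apply le_ciInf
    intro n
    exact ciInf_le (S.bddBelow_ψ' t M hM hMf θ) (n+1)

lemma φ_invariance (hM : 0 < M) (hMf : ∀ θ, S.f t θ M < M) (θ : Θ) :
    S.φ t M (S.T θ) = S.f t θ (S.φ t M θ) := by
  have hbb := S.bddBelow_ψ' t M hM hMf θ
  have hanti := S.ψ_antitone t M hM hMf θ
  have ht1 : Tendsto (fun n => S.ψ t M n θ) atTop (𝓝 (S.φ t M θ)) := by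
    rw [S.φ_eq_iInf0 t M hM hMf θ]
    exact tendsto_atTop_ciInf hanti hbb
  have hmem : ∀ n, S.ψ t M n θ ∈ Set.Ici (0:ℝ) :=
    fun n => (S.ψ_pos_le t M hM hMf n θ).1.le
  have hφmem : S.φ t M θ ∈ Set.Ici (0:ℝ) := S.φ_nonneg t M hM hMf θ
  have ht2 : Tendsto (fun n => S.h (S.ψ t M n θ)) atTop (𝓝 (S.h (S.φ t M θ))) := by
    have hw : Tendsto (fun n => S.ψ t M n θ) atTop (𝓝[Set.Ici 0] (S.φ t M θ)) :=
      tendsto_nhdsWithin_of_tendsto_nhds_of_eventually_within _ ht1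
        (Eventually.of_forall hmem)
    exact ((S.h_contOn (S.φ t M θ) hφmem).tendsto).comp hw
  have ht3 : Tendsto (fun n => S.f t θ (S.ψ t M n θ)) atTop (𝓝 (S.f t θ (S.φ t M θ))) := by
    unfold f
    exact (tendsto_const_nhds.mul ht2)
  have ht4 : Tendsto (fun n => S.ψ t M (n+1) (S.T θ)) atTop (𝓝 (S.φ t M (S.T θ))) := by
    have h5 : Tendsto (fun n => S.ψ t M n (S.T θ)) atTop (𝓝 (S.φ t M (S.T θ))) := by
      rw [S.φ_eq_iInf0 t M hM hMf (S.T θ)]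
      exact tendsto_atTop_ciInf (S.ψ_antitone t M hM hMf (S.T θ)) (S.bddBelow_ψ' t M hM hMf (S.T θ))
    exact h5.comp (tendsto_add_atTop_nat 1)
  have heq : (fun n => S.ψ t M (n+1) (S.T θ)) = (fun n => S.f t θ (S.ψ t M n θ)) := by
    funext n; exact S.ψ_succ_T t M n θ
  rw [heq] at ht4
  exact tendsto_nhds_unique ht4 ht3

end Bpart

section LemmaA

/-- Semi-uniform lemma: if some invariant probability measure has positive mean for `v`,
then some point has all Birkhoff sums nonnegative. -/
lemma lemA {X : Type*} [TopologicalSpace X] [CompactSpace X] [MeasurableSpace X]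
    [BorelSpace X] (R : X → X) (hR : Continuous R) (v : X → ℝ) (hv : Continuous v)
    (μ : MeasureTheory.Measure X) [MeasureTheory.IsProbabilityMeasure μ]
    (hμ : MeasureTheory.MeasurePreserving R μ μ)
    (hint : 0 < ∫ x, v x ∂μ) :
    ∃ x : X, ∀ n : ℕ, 0 ≤ ∑ k ∈ Finset.range n, v (R^[k] x) := by
  by_contra hcon
  push_neg at hcon
  -- open cover
  set B : ℕ → X → ℝ := fun n x => ∑ k ∈ Finset.range n, v (R^[k] x) with hB
  have hBcont : ∀ n, Continuous (B n) := by
    intro n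
    apply continuous_finset_sum
    intro k _
    exact hv.comp (hR.iterate k)
  have hopen : ∀ n : ℕ, IsOpen {x | B n x < 0} :=
    fun n => isOpen_lt (hBcont n) continuous_const
  have hcover : (Set.univ : Set X) ⊆ ⋃ n, {x | B n x < 0} := by
    intro x _
    obtain ⟨n, hn⟩ := hcon x
    exact Set.mem_iUnion.2 ⟨n, hn⟩
  obtain ⟨s, hs⟩ := isCompact_univ.elim_finite_subcover _ hopen hcover
  set N : ℕ := s.sup id with hN
  obtain ⟨C, hC⟩ := isCompact_univ.exists_bound_of_continuousOn hv.continuousOn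
  set C' : ℝ := max C 0 with hC'
  have hC'0 : 0 ≤ C' := le_max_right _ _
  have hvle : ∀ x, v x ≤ C' := by
    intro x
    have := hC x (Set.mem_univ x)
    rw [Real.norm_eq_abs] at this
    exact le_trans (le_abs_self _) (le_trans this (le_max_left _ _))
  -- key bound by strong induction
  have key : ∀ m : ℕ, ∀ x : X, B m x ≤ N * C' := by
    intro m
    induction m using Nat.strong_induction_on with
    | _ m ih =>
      intro x
      obtain ⟨n, hns, hnx⟩ : ∃ n ∈ s, x ∈ {y | B n y < 0} := by
        have := hs (Set.mem_univ x)
        simpa using this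
      have hn1 : 1 ≤ n := by
        rcases Nat.eq_zero_or_pos n with rfl | h
        · simp [hB] at hnx
        · exact h
      have hnN : n ≤ N := Finset.le_sup (f := id) hns
      by_cases hm : m ≤ N
      · calc B m x ≤ ∑ k ∈ Finset.range m, C' :=
              Finset.sum_le_sum (fun k _ => hvle _)
          _ = m * C' := by rw [Finset.sum_const, Finset.card_range]; ring
          _ ≤ N * C' := by
              apply mul_le_mul_of_nonneg_right _ hC'0
              exact_mod_cast hm
      · push_neg at hm
        have hnm : n ≤ m := le_trans hnN hm.le
        have hgen : ∀ (a b : ℕ) (y : X), B (a + b) y = B a y + B b (R^[a] y) := by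
          intro a b y
          rw [hB]
          simp only []
          rw [Finset.sum_range_add]
          congr 1
          apply Finset.sum_congr rfl
          intro k _
          rw [show a + k = k + a by omega, Function.iterate_add_apply]
        have hsplit : B m x = B n x + B (m - n) (R^[n] x) := by
          have := hgen n (m - n) x
          rwa [show n + (m - n) = m by omega] at this
        have hlt : m - n < m := by omega
        have := ih (m - n) hlt (R^[n] x)
        have hnx' : B n x < 0 := hnx
        linarith
  -- integrate
  have hint_comp : ∀ k : ℕ, MeasureTheory.Integrable (fun x => v (R^[k] x)) μ := by
    intro k
    refine Continuous.integrable_of_hasCompactSupport (hv.comp (hR.iterate k)) ?_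
    exact (isClosed_tsupport _).isCompact
  have hicomp : ∀ k : ℕ, ∫ x, v (R^[k] x) ∂μ = ∫ x, v x ∂μ := by
    intro k
    have hk : MeasureTheory.MeasurePreserving R^[k] μ μ := hμ.iterate k
    rw [← MeasureTheory.integral_map hk.measurable.aemeasurable hv.aestronglyMeasurable,
      hk.map_eq]
  have hBint : ∀ m : ℕ, ∫ x, B m x ∂μ = m * ∫ x, v x ∂μ := by
    intro m
    rw [hB]
    simp only []
    rw [MeasureTheory.integral_finset_sum _ (fun k _ => hint_comp k)]
    rw [Finset.sum_congr rfl (fun k _ => hicomp k)]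
    rw [Finset.sum_const, Finset.card_range]
    simp
  have hle : ∀ m : ℕ, (m : ℝ) * ∫ x, v x ∂μ ≤ N * C' := by
    intro m
    rw [← hBint m]
    have hBi : MeasureTheory.Integrable (B m) μ :=
      MeasureTheory.integrable_finset_sum _ (fun k _ => hint_comp k)
    calc ∫ x, B m x ∂μ ≤ ∫ _, (N : ℝ) * C' ∂μ :=
          MeasureTheory.integral_mono hBi (MeasureTheory.integrable_const _)
            (fun x => key m x)
      _ = N * C' := by simp
  obtain ⟨m, hm⟩ := exists_nat_gt ((N * C') / ∫ x, v x ∂μ)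
  have := hle m
  rw [div_lt_iff₀ hint] at hm
  linarith

end LemmaA

section Glue
variable {X : Type*} [MeasurableSpace X]

lemma measurePreserving_Tinv (S : Setting X) (μ : MeasureTheory.Measure X)
    (hμ : MeasureTheory.MeasurePreserving S.T μ μ) :
    MeasureTheory.MeasurePreserving S.Tinv μ μ := by
  let e : X ≃ᵐ X :=
    { toFun := S.T
      invFun := S.Tinv
      left_inv := S.left_inv
      right_inv := S.right_inv
      measurable_toFun := S.T_meas
      measurable_invFun := S.Tinv_meas }
  have he : MeasureTheory.MeasurePreserving (⇑e) μ μ := hμ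
  exact he.symm e

end Glue

section Core
variable {Θ : Type*} [TopologicalSpace Θ] [CompactSpace Θ] [MeasurableSpace Θ]
  [BorelSpace Θ] (S : Setting Θ)

lemma log_g_cont (hgc : Continuous S.g) : Continuous (fun θ => Real.log (S.g θ)) :=
  hgc.log (fun θ => (S.g_pos θ).ne')

lemma integral_log_g_Tinv (hTinv : Continuous S.Tinv) (hgc : Continuous S.g)
    (μ : MeasureTheory.Measure Θ) [MeasureTheory.IsProbabilityMeasure μ]
    (hμ : MeasureTheory.MeasurePreserving S.T μ μ) :
    ∫ θ, Real.log (S.g (S.Tinv θ)) ∂μ = ∫ θ, Real.log (S.g θ) ∂μ := by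
  have hTi := measurePreserving_Tinv S μ hμ
  rw [← MeasureTheory.integral_map hTi.measurable.aemeasurable
    (S.log_g_cont hgc).aestronglyMeasurable, hTi.map_eq]

lemma integrable_cont (w : Θ → ℝ) (hw : Continuous w) (μ : MeasureTheory.Measure Θ)
    [MeasureTheory.IsProbabilityMeasure μ] : MeasureTheory.Integrable w μ :=
  hw.integrable_of_hasCompactSupport (isClosed_tsupport _).isCompact

/-- A point whose backward Birkhoff sums of `log g` are all `≥ n*c`. -/
lemma exists_point_ge (hTinv : Continuous S.Tinv) (hgc : Continuous S.g)
    (μ : MeasureTheory.Measure Θ) [MeasureTheory.IsProbabilityMeasure μ]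
    (hμ : MeasureTheory.MeasurePreserving S.T μ μ) (c : ℝ)
    (hc : c < ∫ θ, Real.log (S.g θ) ∂μ) :
    ∃ θ : Θ, ∀ n : ℕ,
      (n : ℝ) * c ≤ ∑ k ∈ Finset.range n, Real.log (S.g (S.Tinv^[k+1] θ)) := by
  set u : Θ → ℝ := fun θ => Real.log (S.g (S.Tinv θ)) - c with hu
  have hucont : Continuous u := ((S.log_g_cont hgc).comp hTinv).sub continuous_const
  have hint : 0 < ∫ θ, u θ ∂μ := by
    rw [hu]
    rw [MeasureTheory.integral_sub (integrable_cont (fun θ => Real.log (S.g (S.Tinv θ)))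
      (by exact (S.log_g_cont hgc).comp hTinv) μ)
      (MeasureTheory.integrable_const _)]
    rw [S.integral_log_g_Tinv hTinv hgc μ hμ]
    simp only [MeasureTheory.integral_const, MeasureTheory.measure_univ, ENNReal.toReal_one,
      one_smul, MeasureTheory.probReal_univ]
    linarith
  obtain ⟨θ, hθ⟩ := lemA S.Tinv hTinv u hucont μ (measurePreserving_Tinv S μ hμ) hint
  refine ⟨θ, fun n => ?_⟩
  have := hθ n
  have he : ∀ k : ℕ, u (S.Tinv^[k] θ) = Real.log (S.g (S.Tinv^[k+1] θ)) - c := by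
    intro k
    rw [hu]
    simp only []
    rw [← Function.iterate_succ_apply' S.Tinv k θ]
  rw [Finset.sum_congr rfl (fun k _ => he k), Finset.sum_sub_distrib, Finset.sum_const,
    Finset.card_range] at this
  have : (0:ℝ) ≤ (∑ k ∈ Finset.range n, Real.log (S.g (S.Tinv^[k+1] θ))) - n * c := by
    simpa using this
  linarith

/-- A point whose backward Birkhoff sums of `log g` are all `≤ n*c`. -/
lemma exists_point_le (hTinv : Continuous S.Tinv) (hgc : Continuous S.g)
    (μ : MeasureTheory.Measure Θ) [MeasureTheory.IsProbabilityMeasure μ]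
    (hμ : MeasureTheory.MeasurePreserving S.T μ μ) (c : ℝ)
    (hc : ∫ θ, Real.log (S.g θ) ∂μ < c) :
    ∃ θ : Θ, ∀ n : ℕ,
      ∑ k ∈ Finset.range n, Real.log (S.g (S.Tinv^[k+1] θ)) ≤ (n : ℝ) * c := by
  set u : Θ → ℝ := fun θ => c - Real.log (S.g (S.Tinv θ)) with hu
  have hucont : Continuous u := continuous_const.sub ((S.log_g_cont hgc).comp hTinv)
  have hint : 0 < ∫ θ, u θ ∂μ := by
    rw [hu]
    rw [MeasureTheory.integral_sub (MeasureTheory.integrable_const _)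
      (integrable_cont (fun θ => Real.log (S.g (S.Tinv θ)))
      (by exact (S.log_g_cont hgc).comp hTinv) μ)]
    rw [S.integral_log_g_Tinv hTinv hgc μ hμ]
    simp only [MeasureTheory.integral_const, MeasureTheory.measure_univ, ENNReal.toReal_one,
      one_smul, MeasureTheory.probReal_univ]
    linarith
  obtain ⟨θ, hθ⟩ := lemA S.Tinv hTinv u hucont μ (measurePreserving_Tinv S μ hμ) hint
  refine ⟨θ, fun n => ?_⟩
  have := hθ n
  have he : ∀ k : ℕ, u (S.Tinv^[k] θ) = c - Real.log (S.g (S.Tinv^[k+1] θ)) := by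
    intro k
    rw [hu]
    simp only []
    rw [← Function.iterate_succ_apply' S.Tinv k θ]
  rw [Finset.sum_congr rfl (fun k _ => he k), Finset.sum_sub_distrib, Finset.sum_const,
    Finset.card_range] at this
  have : (0:ℝ) ≤ (n : ℝ) * c - ∑ k ∈ Finset.range n, Real.log (S.g (S.Tinv^[k+1] θ)) := by
    simpa using this
  linarith

end Core


section Part1
variable {Θ : Type*} [MeasurableSpace Θ] (S : Setting Θ) (t M : ℝ)

lemma part1_zero (hM : 0 < M) (hMf : ∀ θ, S.f t θ M < M) (θb : Θ)
    (Hsum : ∀ n : ℕ, ∑ k ∈ Finset.range n, Real.log (S.g (S.Tinv^[k+1] θb)) ≤ (n:ℝ) * t) :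
    S.φ t M θb = 0 := by
  by_contra hp0
  have hp : 0 < S.φ t M θb := lt_of_le_of_ne (S.φ_nonneg t M hM hMf θb) (Ne.symm hp0)
  set p : ℝ := S.φ t M θb with hpdef
  set a : ℕ → ℝ := fun k => S.φ t M (S.Tinv^[k] θb) with ha
  have ha0 : a 0 = p := rfl
  have hanneg : ∀ k, 0 ≤ a k := fun k => S.φ_nonneg t M hM hMf _
  have haM : ∀ k, a k ≤ M := fun k => S.φ_le_M t M hM hMf _
  have hrec : ∀ k : ℕ, a k = S.f t (S.Tinv^[k+1] θb) (a (k+1)) := by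
    intro k
    have h1 := S.φ_invariance t M hM hMf (S.Tinv^[k+1] θb)
    have h2 : S.T (S.Tinv^[k+1] θb) = S.Tinv^[k] θb := by
      rw [Function.iterate_succ_apply' S.Tinv, S.right_inv]
    rw [h2] at h1
    exact h1
  have hapos : ∀ k, 0 < a k := by
    intro k
    induction k with
    | zero => rw [ha0]; exact hp
    | succ k ih =>
      rcases lt_or_eq_of_le (hanneg (k+1)) with h | h
      · exact h
      · exfalso
        have h3 := hrec k
        rw [← h] at h3
        unfold Setting.f at h3
        rw [S.h_zero, mul_zero] at h3
        exact absurd h3 (ne_of_gt ih)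
  -- telescoping
  set G : ℕ → ℝ := fun k => Real.exp (-t) * S.g (S.Tinv^[k+1] θb) with hG
  set ρq : ℕ → ℝ := fun k => S.h (a (k+1)) / a (k+1) with hρ
  have hstep : ∀ n : ℕ, a n = (G n * ρq n) * a (n+1) := by
    intro n
    have h1 := hrec n
    unfold Setting.f at h1
    rw [hG, hρ]
    simp only []
    rw [mul_assoc, div_mul_cancel₀ _ (hapos (n+1)).ne']
    exact h1
  have htel : ∀ n : ℕ, a 0 = (∏ k ∈ Finset.range n, (G k * ρq k)) * a n := by
    intro n
    induction n with
    | zero => simp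
    | succ n ih =>
      rw [Finset.prod_range_succ, ih, hstep n]
      ring
  -- bounds
  have hGpos : ∀ k, 0 < G k := fun k => mul_pos (Real.exp_pos _) (S.g_pos _)
  have hGprod : ∀ n : ℕ, (∏ k ∈ Finset.range n, G k) ≤ 1 := by
    intro n
    have he : ∀ k ∈ Finset.range n, G k = Real.exp (Real.log (S.g (S.Tinv^[k+1] θb)) - t) := by
      intro k _
      rw [hG]
      simp only []
      rw [Real.exp_sub, Real.exp_log (S.g_pos _)]
      rw [div_eq_mul_inv, ← Real.exp_neg]
      ring
    rw [Finset.prod_congr rfl he, ← Real.exp_sum]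
    rw [show (1:ℝ) = Real.exp 0 from (Real.exp_zero).symm]
    apply Real.exp_le_exp.2
    rw [Finset.sum_sub_distrib, Finset.sum_const, Finset.card_range]
    have := Hsum n
    simp only [nsmul_eq_mul]
    linarith
  have hρnneg : ∀ k, 0 ≤ ρq k := fun k =>
    div_nonneg (S.h_pos _ (hapos (k+1))).le (hapos (k+1)).le
  have hρle1 : ∀ k, ρq k ≤ 1 := fun k =>
    div_le_one_of_le₀ (S.h_le_self _ (hapos (k+1)).le) (hapos (k+1)).le
  have hρprod_le1 : ∀ n : ℕ, (∏ k ∈ Finset.range n, ρq k) ≤ 1 := by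
    intro n
    calc (∏ k ∈ Finset.range n, ρq k) ≤ ∏ k ∈ Finset.range n, 1 :=
          Finset.prod_le_prod (fun k _ => hρnneg k) (fun k _ => hρle1 k)
      _ = 1 := Finset.prod_const_one
  have hfullprod : ∀ n : ℕ, (∏ k ∈ Finset.range n, (G k * ρq k)) =
      (∏ k ∈ Finset.range n, G k) * (∏ k ∈ Finset.range n, ρq k) :=
    fun n => Finset.prod_mul_distrib
  -- a n ≥ p
  have hage : ∀ n : ℕ, p ≤ a n := by
    intro n
    have h1 := htel n
    rw [hfullprod] at h1
    have h2 : (∏ k ∈ Finset.range n, G k) * (∏ k ∈ Finset.range n, ρq k) ≤ 1 := by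
      calc (∏ k ∈ Finset.range n, G k) * (∏ k ∈ Finset.range n, ρq k)
          ≤ 1 * 1 := mul_le_mul (hGprod n) (hρprod_le1 n)
            (Finset.prod_nonneg (fun k _ => hρnneg k)) zero_le_one
        _ = 1 := by ring
    calc p = (∏ k ∈ Finset.range n, G k) * (∏ k ∈ Finset.range n, ρq k) * a n := by
          rw [← h1, ha0]
      _ ≤ 1 * a n := mul_le_mul_of_nonneg_right h2 (hanneg n)
      _ = a n := one_mul _
  -- ratio bound
  set r : ℝ := S.h p / p with hr
  have hr1 : r < 1 := by
    rw [hr, div_lt_one hp]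
    exact S.h_lt_self p hp
  have hrnneg : 0 ≤ r := div_nonneg (S.h_pos p hp).le hp.le
  have hρler : ∀ k, ρq k ≤ r := fun k => S.ratio_anti p (a (k+1)) hp (hage (k+1))
  have hρprod : ∀ n : ℕ, (∏ k ∈ Finset.range n, ρq k) ≤ r ^ n := by
    intro n
    calc (∏ k ∈ Finset.range n, ρq k) ≤ ∏ k ∈ Finset.range n, r :=
          Finset.prod_le_prod (fun k _ => hρnneg k) (fun k _ => hρler k)
      _ = r ^ n := by rw [Finset.prod_const, Finset.card_range]
  -- contradiction
  have hfinal : ∀ n : ℕ, p ≤ r ^ n * M := by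
    intro n
    have h1 := htel n
    rw [hfullprod] at h1
    calc p = (∏ k ∈ Finset.range n, G k) * (∏ k ∈ Finset.range n, ρq k) * a n := by
          rw [← h1, ha0]
      _ ≤ 1 * (r ^ n) * M := by
          apply mul_le_mul
          · apply mul_le_mul (hGprod n) (hρprod n)
              (Finset.prod_nonneg (fun k _ => hρnneg k)) zero_le_one
          · exact haM n
          · exact hanneg n
          · positivity
      _ = r ^ n * M := by ring
  obtain ⟨n, hn⟩ := exists_pow_lt_of_lt_one (show (0:ℝ) < p / M from div_pos hp hM) hr1
  have := hfinal n
  rw [lt_div_iff₀ hM] at hn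
  linarith

end Part1

section Part2
variable {Θ : Type*} [MeasurableSpace Θ] (S : Setting Θ) (t M : ℝ)

lemma part2_pos (hM : 0 < M) (hMf : ∀ θ, S.f t θ M < M) (ε : ℝ) (hε : 0 < ε) (θs : Θ)
    (Hsum : ∀ n : ℕ, (n:ℝ) * (t + ε) ≤ ∑ k ∈ Finset.range n, Real.log (S.g (S.Tinv^[k+1] θs))) :
    0 < S.φ t M θs := by
  obtain ⟨δ, hδ0, hδM, hδ⟩ := S.exists_delta (ε/2) M (by linarith) hM
  set r : ℝ := Real.exp (-(ε/2)) with hr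
  have hr0 : 0 < r := Real.exp_pos _
  set G : ℕ → ℝ := fun k => Real.exp (-t) * S.g (S.Tinv^[k+1] θs) with hG
  set P : ℕ → ℝ := fun n => ∏ k ∈ Finset.range n, G k with hP
  have hGpos : ∀ k, 0 < G k := fun k => mul_pos (Real.exp_pos _) (S.g_pos _)
  have hPpos : ∀ n, 0 < P n := fun n => Finset.prod_pos (fun k _ => hGpos k)
  have hP1 : ∀ n : ℕ, 1 ≤ P n * r ^ n := by
    intro n
    have he : ∀ k ∈ Finset.range n, G k = Real.exp (Real.log (S.g (S.Tinv^[k+1] θs)) - t) := by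
      intro k _
      rw [hG]
      simp only []
      rw [Real.exp_sub, Real.exp_log (S.g_pos _), div_eq_mul_inv, ← Real.exp_neg]
      ring
    have hrn : r ^ n = Real.exp ((n:ℝ) * (-(ε/2))) := by
      rw [hr, ← Real.exp_nat_mul]
    rw [hP]
    simp only []
    rw [Finset.prod_congr rfl he, ← Real.exp_sum, hrn, ← Real.exp_add]
    rw [show (1:ℝ) = Real.exp 0 from (Real.exp_zero).symm]
    apply Real.exp_le_exp.2
    rw [Finset.sum_sub_distrib, Finset.sum_const, Finset.card_range]
    have := Hsum n
    simp only [nsmul_eq_mul]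
    have hn2 : (0:ℝ) ≤ (n:ℝ) * (ε/2) := by positivity
    nlinarith [Hsum n]
  -- main induction
  have main : ∀ n : ℕ, ∀ y : ℝ, 0 < y → y ≤ M →
      min δ (P n * r ^ n * min y δ) ≤ S.fn t n (S.Tinv^[n] θs) y := by
    intro n
    induction n with
    | zero =>
      intro y hy hyM
      show min δ (P 0 * r ^ 0 * min y δ) ≤ y
      rw [hP]
      simp only [Finset.range_zero, Finset.prod_empty, pow_zero, mul_one, one_mul]
      calc min δ (min y δ) ≤ min y δ := min_le_right _ _
        _ ≤ y := min_le_left _ _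
    | succ n ih =>
      intro y hy hyM
      have hinner : S.fn t (n+1) (S.Tinv^[n+1] θs) y
          = S.fn t n (S.Tinv^[n] θs) (S.f t (S.Tinv^[n+1] θs) y) := by
        rw [S.fn_succ_inner t n (S.Tinv^[n+1] θs) y]
        congr 1
        rw [Function.iterate_succ_apply' S.Tinv, S.right_inv]
      set y' : ℝ := S.f t (S.Tinv^[n+1] θs) y with hy'def
      have hy'pos : 0 < y' := S.f_pos t trivial _ hy
      have hy'M : y' ≤ M := le_trans (S.f_mono t _ hy.le hyM) (hMf _).le
      have hG' : y' = G n * S.h y := by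
        rw [hy'def, hG]
        unfold Setting.f
        simp only []
      have hPn1 : P (n+1) = P n * G n := by
        rw [hP]; exact Finset.prod_range_succ G n
      rw [hinner]
      rcases le_or_gt δ y' with hcase | hcase
      · -- y' ≥ δ : value at least δ
        have h1 := ih y' hy'pos hy'M
        have h2 : min y' δ = δ := min_eq_right hcase
        rw [h2] at h1
        have h3 : δ ≤ P n * r ^ n * δ := by
          nlinarith [hP1 n, hδ0]
        have h4 : min δ (P n * r ^ n * δ) = δ := min_eq_left h3
        rw [h4] at h1
        calc min δ (P (n+1) * r ^ (n+1) * min y δ) ≤ δ := min_le_left _ _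
          _ ≤ S.fn t n (S.Tinv^[n] θs) y' := h1
      · -- y' < δ
        have h1 := ih y' hy'pos hy'M
        have h2 : min y' δ = y' := min_eq_left hcase.le
        rw [h2] at h1
        have hmy : 0 < min y δ := lt_min hy hδ0
        have hmyδ : min y δ ≤ δ := min_le_right _ _
        have hh : r * min y δ ≤ S.h y := by
          have hstep1 : Real.exp (-(ε/2)) * min y δ ≤ S.h (min y δ) :=
            hδ (min y δ) hmy hmyδ
          have hstep2 : S.h (min y δ) ≤ S.h y := S.h_monoOn _ _ hmy.le (min_le_left _ _)
          rw [hr]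
          linarith
        have hkey : P (n+1) * r ^ (n+1) * min y δ ≤ P n * r ^ n * y' := by
          rw [hPn1, hG', pow_succ]
          have e1 : P n * G n * (r ^ n * r) * min y δ
              = (P n * r ^ n) * (G n * (r * min y δ)) := by ring
          have e2 : P n * r ^ n * (G n * S.h y) = (P n * r ^ n) * (G n * S.h y) := by ring
          rw [e1, e2]
          apply mul_le_mul_of_nonneg_left _ (mul_nonneg (hPpos n).le (pow_pos hr0 n).le)
          exact mul_le_mul_of_nonneg_left hh (hGpos n).le
        calc min δ (P (n+1) * r ^ (n+1) * min y δ) ≤ min δ (P n * r ^ n * y') := by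
              apply min_le_min le_rfl hkey
          _ ≤ S.fn t n (S.Tinv^[n] θs) y' := h1
  -- conclude
  have hψ : ∀ n : ℕ, δ ≤ S.ψ t M n θs := by
    intro n
    have h1 := main n M hM le_rfl
    have h2 : min M δ = δ := min_eq_right hδM
    rw [h2] at h1
    have h3 : δ ≤ P n * r ^ n * δ := by nlinarith [hP1 n, hδ0]
    have h4 : min δ (P n * r ^ n * δ) = δ := min_eq_left h3
    rw [h4] at h1
    exact h1
  have : δ ≤ S.φ t M θs := le_ciInf (fun n => hψ (n+1))
  linarith

end Part2

section Diagonal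
variable {Θ : Type*} [TopologicalSpace Θ] [CompactSpace Θ] [MeasurableSpace Θ]
  [BorelSpace Θ] (S : Setting Θ) (t : ℝ)

lemma part1_exists (hTinv : Continuous S.Tinv) (hgc : Continuous S.g)
    (hmu : ∀ ε : ℝ, 0 < ε → ∃ μ : MeasureTheory.Measure Θ,
      MeasureTheory.IsProbabilityMeasure μ ∧ MeasureTheory.MeasurePreserving S.T μ μ ∧
      ∫ θ, Real.log (S.g θ) ∂μ < t + ε) :
    ∃ θb : Θ, ∀ n : ℕ,
      ∑ k ∈ Finset.range n, Real.log (S.g (S.Tinv^[k+1] θb)) ≤ (n:ℝ) * t := by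
  set F : ℕ → Θ → ℝ := fun n θ => ∑ k ∈ Finset.range n, Real.log (S.g (S.Tinv^[k+1] θ))
    with hF
  have hFcont : ∀ n, Continuous (F n) := by
    intro n
    apply continuous_finset_sum
    intro k _
    exact (S.log_g_cont hgc).comp (hTinv.iterate (k+1))
  set A : ℕ → Set Θ := fun j => {θ | ∀ n : ℕ, F n θ ≤ (n:ℝ) * (t + 1/(j+1))} with hA
  have hclosed : ∀ j, IsClosed (A j) := by
    intro j
    have : A j = ⋂ n : ℕ, {θ | F n θ ≤ (n:ℝ) * (t + 1/(j+1))} := by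
      ext θ; simp [hA, Set.mem_iInter]
    rw [this]
    exact isClosed_iInter (fun n => isClosed_le (hFcont n) continuous_const)
  have hnonempty : ∀ j : ℕ, (A j).Nonempty := by
    intro j
    have hj : (0:ℝ) < 1/(j+1) := by positivity
    obtain ⟨μ, hprob, hmp, hint⟩ := hmu (1/(j+1)) hj
    obtain ⟨θ, hθ⟩ := S.exists_point_le hTinv hgc μ hmp (t + 1/(j+1)) hint
    exact ⟨θ, hθ⟩
  have hsub : ∀ j : ℕ, A (j+1) ⊆ A j := by
    intro j θ hθ n
    refine le_trans (hθ n) ?_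
    apply mul_le_mul_of_nonneg_left _ (Nat.cast_nonneg n)
    have : (1:ℝ)/(j+1+1) ≤ 1/(j+1) := by
      apply one_div_le_one_div_of_le (by positivity)
      push_cast
      linarith
    push_cast at this ⊢
    linarith
  obtain ⟨θb, hθb⟩ := IsCompact.nonempty_iInter_of_sequence_nonempty_isCompact_isClosed
    A hsub hnonempty ((hclosed 0).isCompact) hclosed
  refine ⟨θb, fun n => ?_⟩
  by_contra hcon
  push_neg at hcon
  set sgap : ℝ := F n θb - (n:ℝ) * t with hs
  have hsgap : 0 < sgap := by rw [hs]; linarith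
  obtain ⟨j, hj⟩ := exists_nat_gt ((n:ℝ) / sgap)
  have hθbj : θb ∈ A j := by
    have := Set.mem_iInter.1 hθb j
    exact this
  have h1 := hθbj n
  have h2 : (n:ℝ) * (1/(j+1)) < sgap := by
    rw [div_lt_iff₀ hsgap] at hj
    rw [mul_one_div, div_lt_iff₀ (show (0:ℝ) < (j:ℝ)+1 by positivity)]
    nlinarith [hsgap]
  rw [mul_add] at h1
  rw [hs] at h2
  linarith

end Diagonal

end Setting

/-- in the topological setting, for `γ_min ≤ t < γ_max` one has
`N_t ≠ ∅` and `N_t ≠ Θ`. -/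
theorem stmt17 {Θ : Type*} [TopologicalSpace Θ] [CompactSpace Θ] [Nonempty Θ]
    [TopologicalSpace.MetrizableSpace Θ] [MeasurableSpace Θ] [BorelSpace Θ]
    (S : Setting Θ) (hT : Continuous S.T) (hTinv : Continuous S.Tinv)
    (hgc : Continuous S.g)
    (M : ℝ → ℝ) (hM : ∀ t, 0 < M t) (hMf : ∀ t θ, S.f t θ (M t) < M t)
    (t : ℝ) (ht1 : S.γmin ≤ t) (ht2 : t < S.γmax) :
    S.Nset t (M t) ≠ ∅ ∧ S.Nset t (M t) ≠ Set.univ := by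
  have hMt : 0 < M t := hM t
  have hMft : ∀ θ, S.f t θ (M t) < M t := fun θ => hMf t θ
  have hne : S.γSet.Nonempty := by
    by_contra hcon
    rw [Set.not_nonempty_iff_eq_empty] at hcon
    have h1 : S.γmin = 0 := by rw [Setting.γmin, hcon, Real.sInf_empty]
    have h2 : S.γmax = 0 := by rw [Setting.γmax, hcon, Real.sSup_empty]
    rw [h1] at ht1; rw [h2] at ht2; linarith
  constructor
  · -- N_t is nonempty
    have hmu : ∀ ε : ℝ, 0 < ε → ∃ μ : MeasureTheory.Measure Θ,
        MeasureTheory.IsProbabilityMeasure μ ∧ MeasureTheory.MeasurePreserving S.T μ μ ∧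
        ∫ θ, Real.log (S.g θ) ∂μ < t + ε := by
      intro ε hε
      have hlt : sInf S.γSet < t + ε := lt_of_le_of_lt ht1 (by linarith)
      obtain ⟨x, hxmem, hx⟩ := exists_lt_of_csInf_lt hne hlt
      obtain ⟨μ, hprob, hmp, hxeq⟩ := hxmem
      refine ⟨μ, hprob, hmp, ?_⟩
      unfold Setting.γfn at hxeq
      rw [← hxeq]
      exact hx
    obtain ⟨θb, hθb⟩ := S.part1_exists t hTinv hgc hmu
    have hzero := S.part1_zero t (M t) hMt hMft θb hθb
    apply Set.nonempty_iff_ne_empty.1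
    exact ⟨θb, hzero⟩
  · -- N_t is not everything
    obtain ⟨x, hxmem, hx⟩ := exists_lt_of_lt_csSup hne ht2
    obtain ⟨μ, hprob, hmp, hxeq⟩ := hxmem
    set ε : ℝ := (x - t)/2 with hεdef
    have hε : 0 < ε := by rw [hεdef]; linarith
    have hint : t + ε < ∫ θ, Real.log (S.g θ) ∂μ := by
      unfold Setting.γfn at hxeq
      rw [← hxeq, hεdef]
      linarith
    obtain ⟨θs, hθs⟩ := S.exists_point_ge hTinv hgc μ hmp (t + ε) hint
    have hpos := S.part2_pos t (M t) hMt hMft ε hε θs hθs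
    intro hcon
    rw [Set.eq_univ_iff_forall] at hcon
    have : S.φ t (M t) θs = 0 := hcon θs
    linarith
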